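/- arXiv:2210.05084 — 3 statements merged into one kernel-verified Lean document; each statement's English description precedes it below -/
import Mathlib

section
/- The KL divergence D(Q₁‖Q₀) between Q₁, the equal mixture of two bivariate Gaussians N((μ_x, μ_y), σ²I) and N((−μ_x, −μ_y), σ²I), and Q₀ = N((0,0), σ²I), equals −(μ_x² + μ_y²)/(2σ²) + E_{Q₁}[log cosh((μ_x X + μ_y Y)/σ²)], where (X,Y) ∼ Q₁. -/
open Real MeasureTheory

lemma gauss_int {a : ℝ} (ha : 0 < a) (m : ℝ) :
    Integrable (fun x : ℝ => Real.exp (-a * (x - m) ^ 2)) :=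
  (integrable_exp_neg_mul_sq ha).comp_sub_right m

lemma gauss_val {a : ℝ} (ha : 0 < a) (m : ℝ) :
    ∫ x : ℝ, Real.exp (-a * (x - m) ^ 2) = Real.sqrt (Real.pi / a) := by
  rw [integral_sub_right_eq_self (fun x => Real.exp (-a * x ^ 2)) m]
  exact integral_gaussian a

lemma abs_gauss_int {a : ℝ} (ha : 0 < a) (m : ℝ) :
    Integrable (fun x : ℝ => |x| * Real.exp (-a * (x - m) ^ 2)) := by
  have h1 : Integrable (fun x : ℝ => |x| * Real.exp (-a * x ^ 2)) := by
    have := (integrable_mul_exp_neg_mul_sq ha).abs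
    simpa [abs_mul, abs_of_pos (Real.exp_pos _)] using this
  have h2 : Integrable (fun x : ℝ =>
      (|x - m| + |m|) * Real.exp (-a * (x - m) ^ 2)) := by
    have := (h1.comp_sub_right m).add (((gauss_int ha m)).const_mul |m|)
    simpa [add_mul, Pi.add_def] using this
  refine h2.mono' ?_ ?_
  · exact (continuous_abs.mul (by continuity)).aestronglyMeasurable
  · filter_upwards with x
    rw [Real.norm_eq_abs, abs_mul, abs_abs, abs_of_pos (Real.exp_pos _)]
    have hx : |x| ≤ |x - m| + |m| := by
      calc |x| = |(x - m) + m| := by ring_nf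
      _ ≤ |x - m| + |m| := abs_add_le _ _
    exact mul_le_mul_of_nonneg_right hx (Real.exp_pos _).le

lemma abs_log_cosh_le (t : ℝ) : |Real.log (Real.cosh t)| ≤ |t| := by
  have h1 : 0 ≤ Real.log (Real.cosh t) := Real.log_nonneg (Real.one_le_cosh t)
  rw [abs_of_nonneg h1]
  have h2 : Real.cosh t ≤ Real.exp |t| := by
    rw [Real.cosh_eq]
    have e1 := Real.exp_le_exp.mpr (le_abs_self t)
    have e2 := Real.exp_le_exp.mpr (neg_le_abs t)
    linarith
  calc Real.log (Real.cosh t) ≤ Real.log (Real.exp |t|) :=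
        Real.log_le_log (Real.cosh_pos _) h2
  _ = |t| := Real.log_exp _

theorem kl_mixture_gaussian (σ μx μy : ℝ) (hσ : 0 < σ) (hμ : (μx, μy) ≠ (0, 0))
    (Q₀ Q₁ : ℝ → ℝ → ℝ)
    (hQ₀ : Q₀ = fun x y => (1 / (2 * Real.pi * σ ^ 2)) * Real.exp (-(x ^ 2 + y ^ 2) / (2 * σ ^ 2)))
    (hQ₁ : Q₁ = fun x y => (1 / 2) * (1 / (2 * Real.pi * σ ^ 2)) *
      (Real.exp (-((x - μx) ^ 2 + (y - μy) ^ 2) / (2 * σ ^ 2)) +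
       Real.exp (-((x + μx) ^ 2 + (y + μy) ^ 2) / (2 * σ ^ 2)))) :
    (∫ x : ℝ, ∫ y : ℝ, Q₁ x y * Real.log (Q₁ x y / Q₀ x y))
      = -(μx ^ 2 + μy ^ 2) / (2 * σ ^ 2)
        + ∫ x : ℝ, ∫ y : ℝ, Q₁ x y * Real.log (Real.cosh ((μx * x + μy * y) / σ ^ 2)) := by
  subst hQ₀ hQ₁
  have hπ : (0:ℝ) < Real.pi := Real.pi_pos
  have hσ2 : (σ:ℝ) ^ 2 ≠ 0 := by positivity
  set a : ℝ := (2 * σ ^ 2)⁻¹ with ha_def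
  have ha : 0 < a := by positivity
  set K : ℝ := (1 / 2) * (1 / (2 * Real.pi * σ ^ 2)) with hK
  set c : ℝ := -(μx ^ 2 + μy ^ 2) / (2 * σ ^ 2) with hc
  set s : ℝ → ℝ → ℝ := fun x y => (μx * x + μy * y) / σ ^ 2 with hs
  -- abbreviations for the four 1-D gaussians
  set f1 : ℝ → ℝ := fun x => Real.exp (-a * (x - μx) ^ 2) with hf1
  set f2 : ℝ → ℝ := fun x => Real.exp (-a * (x + μx) ^ 2) with hf2
  set g1 : ℝ → ℝ := fun y => Real.exp (-a * (y - μy) ^ 2) with hg1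
  set g2 : ℝ → ℝ := fun y => Real.exp (-a * (y + μy) ^ 2) with hg2
  set Q1 : ℝ → ℝ → ℝ := fun x y => (1 / 2) * (1 / (2 * Real.pi * σ ^ 2)) *
      (Real.exp (-((x - μx) ^ 2 + (y - μy) ^ 2) / (2 * σ ^ 2)) +
       Real.exp (-((x + μx) ^ 2 + (y + μy) ^ 2) / (2 * σ ^ 2))) with hQ1def
  set Q0 : ℝ → ℝ → ℝ := fun x y =>
      (1 / (2 * Real.pi * σ ^ 2)) * Real.exp (-(x ^ 2 + y ^ 2) / (2 * σ ^ 2)) with hQ0def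
  -- product decomposition of Q1
  have hdecomp : ∀ x y, Q1 x y = K * (f1 x * g1 y + f2 x * g2 y) := by
    intro x y
    have e1 : Real.exp (-((x - μx) ^ 2 + (y - μy) ^ 2) / (2 * σ ^ 2)) = f1 x * g1 y := by
      rw [hf1, hg1, ← Real.exp_add]; congr 1; rw [ha_def]; field_simp [hσ.ne']; ring
    have e2 : Real.exp (-((x + μx) ^ 2 + (y + μy) ^ 2) / (2 * σ ^ 2)) = f2 x * g2 y := by
      rw [hf2, hg2, ← Real.exp_add]; congr 1; rw [ha_def]; field_simp [hσ.ne']; ring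
    rw [hQ1def, hK]; dsimp only; rw [e1, e2]
  have hQ0pos : ∀ x y, 0 < Q0 x y := by
    intro x y; rw [hQ0def]; positivity
  -- pointwise identity for the log ratio
  have hratio : ∀ x y, Q1 x y / Q0 x y = Real.exp c * Real.cosh (s x y) := by
    intro x y
    have hE1 : Real.exp (-((x - μx) ^ 2 + (y - μy) ^ 2) / (2 * σ ^ 2)) =
        Real.exp (-(x ^ 2 + y ^ 2) / (2 * σ ^ 2)) * (Real.exp c * Real.exp (s x y)) := by
      rw [← Real.exp_add, ← Real.exp_add]; congr 1; rw [hc, hs]; field_simp [hσ.ne']; ring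
    have hE2 : Real.exp (-((x + μx) ^ 2 + (y + μy) ^ 2) / (2 * σ ^ 2)) =
        Real.exp (-(x ^ 2 + y ^ 2) / (2 * σ ^ 2)) * (Real.exp c * Real.exp (-(s x y))) := by
      rw [← Real.exp_add, ← Real.exp_add]; congr 1; rw [hc, hs]; field_simp [hσ.ne']; ring
    have hQeq : Q1 x y = Q0 x y * (Real.exp c * Real.cosh (s x y)) := by
      rw [hQ1def, hQ0def]; dsimp only
      rw [hE1, hE2, Real.cosh_eq]; ring
    rw [hQeq, mul_div_cancel_left₀ _ (hQ0pos x y).ne']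
  have hlog : ∀ x y, Q1 x y * Real.log (Q1 x y / Q0 x y) =
      c * Q1 x y + Q1 x y * Real.log (Real.cosh (s x y)) := by
    intro x y
    rw [hratio, Real.log_mul (Real.exp_ne_zero c) (Real.cosh_pos _).ne', Real.log_exp]
    ring
  -- integrability facts
  have hf1i : Integrable f1 := by rw [hf1]; exact gauss_int ha μx
  have hf2i : Integrable f2 := by
    rw [hf2]; have := gauss_int ha (-μx); simpa [sub_neg_eq_add] using this
  have hg1i : Integrable g1 := by rw [hg1]; exact gauss_int ha μy
  have hg2i : Integrable g2 := by
    rw [hg2]; have := gauss_int ha (-μy); simpa [sub_neg_eq_add] using this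
  have haf1i : Integrable (fun x => |x| * f1 x) := by rw [hf1]; exact abs_gauss_int ha μx
  have haf2i : Integrable (fun x => |x| * f2 x) := by
    rw [hf2]; have := abs_gauss_int ha (-μx); simpa [sub_neg_eq_add] using this
  have hag1i : Integrable (fun y => |y| * g1 y) := by rw [hg1]; exact abs_gauss_int ha μy
  have hag2i : Integrable (fun y => |y| * g2 y) := by
    rw [hg2]; have := abs_gauss_int ha (-μy); simpa [sub_neg_eq_add] using this
  have hQ1i : Integrable (fun p : ℝ × ℝ => Q1 p.1 p.2) (volume.prod volume) := by
    have : Integrable (fun p : ℝ × ℝ => K * (f1 p.1 * g1 p.2 + f2 p.1 * g2 p.2))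
        (volume.prod volume) :=
      ((hf1i.mul_prod hg1i).add (hf2i.mul_prod hg2i)).const_mul K
    exact this.congr (by filter_upwards with p; rw [hdecomp p.1 p.2])
  have hQ1cont : Continuous (fun p : ℝ × ℝ => Q1 p.1 p.2) := by
    rw [hQ1def]; dsimp only; fun_prop
  -- the log cosh integrand on the product space
  set F : ℝ → ℝ → ℝ := fun x y => Q1 x y * Real.log (Real.cosh (s x y)) with hF
  have hQ1nn : ∀ x y, 0 ≤ Q1 x y := by
    intro x y; simp only [hQ1def]; positivity
  have hBint : Integrable (fun p : ℝ × ℝ =>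
      (|μx| * |p.1| + |μy| * |p.2|) / σ ^ 2 * Q1 p.1 p.2) (volume.prod volume) := by
    have h1 : Integrable (fun p : ℝ × ℝ =>
        (|μx| / σ ^ 2 * K) * ((|p.1| * f1 p.1) * g1 p.2 + (|p.1| * f2 p.1) * g2 p.2)
        + (|μy| / σ ^ 2 * K) * (f1 p.1 * (|p.2| * g1 p.2) + f2 p.1 * (|p.2| * g2 p.2)))
        (volume.prod volume) :=
      (((haf1i.mul_prod hg1i).add (haf2i.mul_prod hg2i)).const_mul _).add
        (((hf1i.mul_prod hag1i).add (hf2i.mul_prod hag2i)).const_mul _)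
    exact h1.congr (by
      filter_upwards with p
      rw [hdecomp p.1 p.2]
      field_simp)
  have hFcont : Continuous (fun p : ℝ × ℝ => F p.1 p.2) := by
    rw [hF]
    apply hQ1cont.mul
    apply Continuous.log
    · fun_prop
    · intro p; exact (Real.cosh_pos _).ne'
  have hFint : Integrable (fun p : ℝ × ℝ => F p.1 p.2) (volume.prod volume) := by
    refine hBint.mono' hFcont.aestronglyMeasurable ?_
    filter_upwards with p
    rw [hF]; dsimp only
    rw [Real.norm_eq_abs, abs_mul, abs_of_nonneg (hQ1nn p.1 p.2)]
    have h1 : |Real.log (Real.cosh (s p.1 p.2))| ≤ (|μx| * |p.1| + |μy| * |p.2|) / σ ^ 2 := by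
      refine (abs_log_cosh_le _).trans ?_
      rw [hs]; dsimp only
      rw [abs_div, abs_of_nonneg (sq_nonneg σ)]
      gcongr
      calc |μx * p.1 + μy * p.2| ≤ |μx * p.1| + |μy * p.2| := abs_add_le _ _
      _ = |μx| * |p.1| + |μy| * |p.2| := by rw [abs_mul, abs_mul]
    calc Q1 p.1 p.2 * |Real.log (Real.cosh (s p.1 p.2))|
        ≤ Q1 p.1 p.2 * ((|μx| * |p.1| + |μy| * |p.2|) / σ ^ 2) :=
          mul_le_mul_of_nonneg_left h1 (hQ1nn p.1 p.2)
      _ = (|μx| * |p.1| + |μy| * |p.2|) / σ ^ 2 * Q1 p.1 p.2 := by ring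
  -- total mass of Q1 is 1
  have hmass : (∫ p : ℝ × ℝ, Q1 p.1 p.2 ∂(volume.prod volume)) = 1 := by
    have h1 : (∫ p : ℝ × ℝ, Q1 p.1 p.2 ∂(volume.prod volume)) = ∫ x : ℝ, ∫ y : ℝ, Q1 x y :=
      (MeasureTheory.integral_integral (f := fun x y => Q1 x y) hQ1i).symm
    rw [h1]
    have hinner : ∀ x, (∫ y : ℝ, Q1 x y) =
        K * Real.sqrt (Real.pi / a) * (f1 x + f2 x) := by
      intro x
      have : (∫ y : ℝ, Q1 x y) = ∫ y : ℝ, K * (f1 x * g1 y + f2 x * g2 y) := by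
        congr 1; funext y; exact hdecomp x y
      rw [this, MeasureTheory.integral_const_mul]
      rw [MeasureTheory.integral_add ((hg1i.const_mul _)) ((hg2i.const_mul _))]
      rw [MeasureTheory.integral_const_mul, MeasureTheory.integral_const_mul]
      have hv1 : (∫ y : ℝ, g1 y) = Real.sqrt (Real.pi / a) := by
        rw [hg1]; exact gauss_val ha μy
      have hv2 : (∫ y : ℝ, g2 y) = Real.sqrt (Real.pi / a) := by
        have := gauss_val ha (-μy); rw [hg2]
        simpa [sub_neg_eq_add] using this
      rw [hv1, hv2]; ring
    have : (∫ x : ℝ, ∫ y : ℝ, Q1 x y) =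
        ∫ x : ℝ, K * Real.sqrt (Real.pi / a) * (f1 x + f2 x) := by
      congr 1; funext x; exact hinner x
    rw [this, MeasureTheory.integral_const_mul,
      MeasureTheory.integral_add hf1i hf2i]
    have hv1 : (∫ x : ℝ, f1 x) = Real.sqrt (Real.pi / a) := by
      rw [hf1]; exact gauss_val ha μx
    have hv2 : (∫ x : ℝ, f2 x) = Real.sqrt (Real.pi / a) := by
      have := gauss_val ha (-μx); rw [hf2]
      simpa [sub_neg_eq_add] using this
    rw [hv1, hv2]
    have hsq : Real.sqrt (Real.pi / a) * Real.sqrt (Real.pi / a) = Real.pi / a :=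
      Real.mul_self_sqrt (by positivity)
    rw [mul_assoc, mul_add, hsq, hK, ha_def]
    field_simp
    ring
  -- main computation
  have hsum : Integrable (fun p : ℝ × ℝ => c * Q1 p.1 p.2 + F p.1 p.2)
      (volume.prod volume) := (hQ1i.const_mul c).add hFint
  have key : (∫ x : ℝ, ∫ y : ℝ, Q1 x y * Real.log (Q1 x y / Q0 x y))
      = ∫ x : ℝ, ∫ y : ℝ, (c * Q1 x y + F x y) := by
    congr 1; funext x; congr 1; funext y
    rw [hF]; exact hlog x y
  rw [key]
  have e1 : (∫ x : ℝ, ∫ y : ℝ, (c * Q1 x y + F x y))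
      = ∫ p : ℝ × ℝ, (c * Q1 p.1 p.2 + F p.1 p.2) ∂(volume.prod volume) :=
    MeasureTheory.integral_integral (f := fun x y => c * Q1 x y + F x y) hsum
  rw [e1, MeasureTheory.integral_add (hQ1i.const_mul c) hFint,
    MeasureTheory.integral_const_mul, hmass, mul_one]
  have e2 : (∫ p : ℝ × ℝ, F p.1 p.2 ∂(volume.prod volume)) = ∫ x : ℝ, ∫ y : ℝ, F x y :=
    (MeasureTheory.integral_integral (f := fun x y => F x y) hFint).symm
  rw [e2, hc]
end

section
/- Let Q_t and Q_p be equal mixtures of two bivariate Gaussians with means ±(Aβ cos Θ_t, Aβ sin Θ_t) and ±(Aβ cos Θ_p, Aβ sin Θ_p) respectively, all with covariance σ²I, and Q₀ = N(0, σ²I). Then ∫∫ Q_t(x,y)·Q_p(x,y)/Q₀(x,y) dx dy = cosh(A²β² cos(Θ_p − Θ_t)/σ²). -/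
open Real MeasureTheory

lemma gauss_integrable (s m : ℝ) (hs : 0 < s) :
    Integrable (fun x : ℝ => Real.exp (-(x - m) ^ 2 / (2 * s ^ 2))) := by
  have hb : (0:ℝ) < 1 / (2 * s ^ 2) := by positivity
  have h := (integrable_exp_neg_mul_sq hb).comp_sub_right m
  have he : (fun x : ℝ => Real.exp (-(x - m) ^ 2 / (2 * s ^ 2)))
      = fun x : ℝ => Real.exp (-(1 / (2 * s ^ 2)) * (x - m) ^ 2) := by
    funext x; congr 1; ring
  rw [he]; exact h

lemma gauss_integral (s m : ℝ) (hs : 0 < s) :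
    (∫ x : ℝ, Real.exp (-(x - m) ^ 2 / (2 * s ^ 2))) = Real.sqrt (2 * Real.pi * s ^ 2) := by
  have hb : (0:ℝ) < 1 / (2 * s ^ 2) := by positivity
  have he : (fun x : ℝ => Real.exp (-(x - m) ^ 2 / (2 * s ^ 2)))
      = fun x : ℝ => Real.exp (-(1 / (2 * s ^ 2)) * (x - m) ^ 2) := by
    funext x; congr 1; ring
  rw [he]
  rw [integral_sub_right_eq_self (μ := volume)
    (fun x : ℝ => Real.exp (-(1 / (2 * s ^ 2)) * x ^ 2)) m]
  rw [integral_gaussian]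
  congr 1
  field_simp

theorem cross_integral_cosh (A β σ Θt Θp : ℝ) (hA : 0 < A) (hβ : 0 < β) (hσ : 0 < σ)
    (Q : ℝ → ℝ → ℝ → ℝ) (Q₀ : ℝ → ℝ → ℝ)
    (hQ : Q = fun Θ x y => (1 / 2) * (1 / (2 * Real.pi * σ ^ 2)) *
      (Real.exp (-((x - A * β * Real.cos Θ) ^ 2 + (y - A * β * Real.sin Θ) ^ 2) / (2 * σ ^ 2)) +
       Real.exp (-((x + A * β * Real.cos Θ) ^ 2 + (y + A * β * Real.sin Θ) ^ 2) / (2 * σ ^ 2))))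
    (hQ₀ : Q₀ = fun x y => (1 / (2 * Real.pi * σ ^ 2)) *
      Real.exp (-(x ^ 2 + y ^ 2) / (2 * σ ^ 2))) :
    (∫ x : ℝ, ∫ y : ℝ, Q Θt x y * Q Θp x y / Q₀ x y)
      = Real.cosh (A ^ 2 * β ^ 2 * Real.cos (Θp - Θt) / σ ^ 2) := by
  subst hQ hQ₀
  have hσ2 : (σ:ℝ) ^ 2 ≠ 0 := by positivity
  have hπ : (0:ℝ) < Real.pi := Real.pi_pos
  set tx := A * β * Real.cos Θt with htx
  set ty := A * β * Real.sin Θt with hty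
  set px := A * β * Real.cos Θp with hpx
  set py := A * β * Real.sin Θp with hpy
  set c := (tx * px + ty * py) / σ ^ 2 with hc
  set G : ℝ → ℝ := fun z => Real.exp (-z ^ 2 / (2 * σ ^ 2)) with hG
  have key : ∀ x y : ℝ,
      ((1 / 2) * (1 / (2 * Real.pi * σ ^ 2)) *
        (Real.exp (-((x - tx) ^ 2 + (y - ty) ^ 2) / (2 * σ ^ 2)) +
         Real.exp (-((x + tx) ^ 2 + (y + ty) ^ 2) / (2 * σ ^ 2)))) *
      ((1 / 2) * (1 / (2 * Real.pi * σ ^ 2)) *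
        (Real.exp (-((x - px) ^ 2 + (y - py) ^ 2) / (2 * σ ^ 2)) +
         Real.exp (-((x + px) ^ 2 + (y + py) ^ 2) / (2 * σ ^ 2)))) /
      ((1 / (2 * Real.pi * σ ^ 2)) * Real.exp (-(x ^ 2 + y ^ 2) / (2 * σ ^ 2)))
      = (1 / (8 * Real.pi * σ ^ 2)) *
        (Real.exp c * (G (x - (tx + px)) * G (y - (ty + py)) +
            G (x + (tx + px)) * G (y + (ty + py))) +
         Real.exp (-c) * (G (x - (tx - px)) * G (y - (ty - py)) +
            G (x + (tx - px)) * G (y + (ty - py)))) := by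
    intro x y
    have hE0 : Real.exp (-(x ^ 2 + y ^ 2) / (2 * σ ^ 2)) ≠ 0 := (Real.exp_pos _).ne'
    have hcomb : ∀ u w r : ℝ, u - w = r →
        Real.exp u / Real.exp w = Real.exp r := by
      intro u w r h
      rw [← Real.exp_sub, h]
    have h11 : Real.exp (-((x - tx) ^ 2 + (y - ty) ^ 2) / (2 * σ ^ 2)) *
        Real.exp (-((x - px) ^ 2 + (y - py) ^ 2) / (2 * σ ^ 2)) /
        Real.exp (-(x ^ 2 + y ^ 2) / (2 * σ ^ 2))
        = Real.exp c * (G (x - (tx + px)) * G (y - (ty + py))) := by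
      rw [hG]
      simp only [← Real.exp_add]
      refine hcomb _ _ _ ?_
      rw [hc]; field_simp; ring
    have h22 : Real.exp (-((x + tx) ^ 2 + (y + ty) ^ 2) / (2 * σ ^ 2)) *
        Real.exp (-((x + px) ^ 2 + (y + py) ^ 2) / (2 * σ ^ 2)) /
        Real.exp (-(x ^ 2 + y ^ 2) / (2 * σ ^ 2))
        = Real.exp c * (G (x + (tx + px)) * G (y + (ty + py))) := by
      rw [hG]
      simp only [← Real.exp_add]
      refine hcomb _ _ _ ?_
      rw [hc]; field_simp; ring
    have h12 : Real.exp (-((x - tx) ^ 2 + (y - ty) ^ 2) / (2 * σ ^ 2)) *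
        Real.exp (-((x + px) ^ 2 + (y + py) ^ 2) / (2 * σ ^ 2)) /
        Real.exp (-(x ^ 2 + y ^ 2) / (2 * σ ^ 2))
        = Real.exp (-c) * (G (x - (tx - px)) * G (y - (ty - py))) := by
      rw [hG]
      simp only [← Real.exp_add]
      refine hcomb _ _ _ ?_
      rw [hc]; field_simp; ring
    have h21 : Real.exp (-((x + tx) ^ 2 + (y + ty) ^ 2) / (2 * σ ^ 2)) *
        Real.exp (-((x - px) ^ 2 + (y - py) ^ 2) / (2 * σ ^ 2)) /
        Real.exp (-(x ^ 2 + y ^ 2) / (2 * σ ^ 2))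
        = Real.exp (-c) * (G (x + (tx - px)) * G (y + (ty - py))) := by
      rw [hG]
      simp only [← Real.exp_add]
      refine hcomb _ _ _ ?_
      rw [hc]; field_simp; ring
    have expand : ∀ (e1 e2 f1 f2 e0 K : ℝ), e0 ≠ 0 → K ≠ 0 →
        ((1/2) * K * (e1 + e2)) * ((1/2) * K * (f1 + f2)) / (K * e0)
        = (K / 4) * (e1 * f1 / e0 + e1 * f2 / e0 + e2 * f1 / e0 + e2 * f2 / e0) := by
      intro e1 e2 f1 f2 e0 K h0 hK
      field_simp
      ring
    rw [expand _ _ _ _ _ _ hE0 (by positivity), h11, h12, h21, h22]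
    field_simp
    ring
  simp only [← htx, ← hty, ← hpx, ← hpy, key]
  have hS := gauss_integral σ
  set S := Real.sqrt (2 * Real.pi * σ ^ 2) with hSdef
  have hSS : S * S = 2 * Real.pi * σ ^ 2 := Real.mul_self_sqrt (by positivity)
  have hGint : ∀ m : ℝ, (∫ y : ℝ, G (y - m)) = S := by
    intro m
    simpa [hG] using gauss_integral σ m hσ
  have hGint' : ∀ m : ℝ, (∫ y : ℝ, G (y + m)) = S := by
    intro m
    have := hGint (-m)
    simpa [sub_neg_eq_add] using this
  have hGintg : ∀ m : ℝ, Integrable (fun y : ℝ => G (y - m)) := by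
    intro m
    simpa [hG] using gauss_integrable σ m hσ
  have hGintg' : ∀ m : ℝ, Integrable (fun y : ℝ => G (y + m)) := by
    intro m
    have := hGintg (-m)
    simpa [sub_neg_eq_add] using this
  -- inner integral
  have inner : ∀ x : ℝ,
      (∫ y : ℝ, (1 / (8 * Real.pi * σ ^ 2)) *
        (Real.exp c * (G (x - (tx + px)) * G (y - (ty + py)) +
            G (x + (tx + px)) * G (y + (ty + py))) +
         Real.exp (-c) * (G (x - (tx - px)) * G (y - (ty - py)) +
            G (x + (tx - px)) * G (y + (ty - py)))))
      = (1 / (8 * Real.pi * σ ^ 2)) * S *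
        (Real.exp c * (G (x - (tx + px)) + G (x + (tx + px))) +
         Real.exp (-c) * (G (x - (tx - px)) + G (x + (tx - px)))) := by
    intro x
    rw [integral_const_mul _ _]
    have i1 : Integrable (fun y : ℝ => Real.exp c * (G (x - (tx + px)) * G (y - (ty + py)) +
        G (x + (tx + px)) * G (y + (ty + py)))) :=
      (((hGintg _).const_mul _).add ((hGintg' _).const_mul _)).const_mul _
    have i2 : Integrable (fun y : ℝ => Real.exp (-c) * (G (x - (tx - px)) * G (y - (ty - py)) +
        G (x + (tx - px)) * G (y + (ty - py)))) :=
      (((hGintg _).const_mul _).add ((hGintg' _).const_mul _)).const_mul _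
    rw [integral_add i1 i2, integral_const_mul _ _, integral_const_mul _ _,
      integral_add ((hGintg _).const_mul _) ((hGintg' _).const_mul _),
      integral_add ((hGintg _).const_mul _) ((hGintg' _).const_mul _),
      integral_const_mul _ _, integral_const_mul _ _, integral_const_mul _ _, integral_const_mul _ _,
      hGint, hGint', hGint, hGint']
    ring
  simp only [inner]
  rw [integral_const_mul _ _]
  have i3 : Integrable (fun a : ℝ => Real.exp c * (G (a - (tx + px)) + G (a + (tx + px)))) :=
    ((hGintg _).add (hGintg' _)).const_mul _
  have i4 : Integrable (fun a : ℝ => Real.exp (-c) * (G (a - (tx - px)) + G (a + (tx - px)))) :=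
    ((hGintg _).add (hGintg' _)).const_mul _
  rw [integral_add i3 i4, integral_const_mul _ _, integral_const_mul _ _,
    integral_add (hGintg _) (hGintg' _), integral_add (hGintg _) (hGintg' _),
    hGint, hGint', hGint, hGint']
  have hcval : c = A ^ 2 * β ^ 2 * Real.cos (Θp - Θt) / σ ^ 2 := by
    rw [hc, htx, hty, hpx, hpy, Real.cos_sub]
    ring
  rw [Real.cosh_eq, ← hcval]
  have : (1 / (8 * Real.pi * σ ^ 2)) * S * (Real.exp c * (S + S) + Real.exp (-c) * (S + S))
      = (1 / (8 * Real.pi * σ ^ 2)) * (2 * (S * S)) * (Real.exp c + Real.exp (-c)) := by ring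
  rw [this, hSS]
  field_simp
  ring
end

section
/- Let Q_t, Q_p, Q_z be equal mixtures of two bivariate Gaussians with means ±(Aβ cos Θ_t, Aβ sin Θ_t), ±(Aβ cos Θ_p, Aβ sin Θ_p), ±(Aβ cos Θ_z, Aβ sin Θ_z), all with covariance σ²I, and Q₀ = N(0, σ²I). Then ∫∫ Q_t·Q_p·Q_z/Q₀² dx dy = (1/4)·[exp(−γ(−cos(Δ_tp − Δ_tz) − cos Δ_tp − cos Δ_tz)) + exp(−γ(−cos(Δ_tp − Δ_tz) + cos Δ_tp + cos Δ_tz)) + exp(−γ(cos(Δ_tp − Δ_tz) + cos Δ_tp − cos Δ_tz)) + exp(−γ(cos(Δ_tp − Δ_tz) − cos Δ_tp + cos Δ_tz))], where γ = A²β²/σ² and Δ_tp = Θ_t − Θ_p, Δ_tz = Θ_t − Θ_z. -/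
open Real MeasureTheory

noncomputable def Gg (σ m θ x y : ℝ) : ℝ :=
  Real.exp (-((x - m * Real.cos θ) ^ 2 + (y - m * Real.sin θ) ^ 2) / (2 * σ ^ 2))

noncomputable def phh (bb : Bool) (θ : ℝ) : ℝ := if bb then θ + π else θ

lemma Gg_pi (σ m θ x y : ℝ) :
    Gg σ m (θ + π) x y
      = Real.exp (-((x + m * Real.cos θ) ^ 2 + (y + m * Real.sin θ) ^ 2) / (2 * σ ^ 2)) := by
  unfold Gg
  rw [Real.cos_add_pi, Real.sin_add_pi]
  congr 1
  ring

lemma prod_div_eq (σ m a b c x y : ℝ) (hσ : σ ≠ 0) :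
    Gg σ m a x y * Gg σ m b x y * Gg σ m c x y / (Real.exp (-(x ^ 2 + y ^ 2) / (2 * σ ^ 2))) ^ 2
      = Real.exp (-(3 * m ^ 2) / (2 * σ ^ 2)) *
        (Real.exp (-(1 / (2 * σ ^ 2)) * x ^ 2 +
            (m * (Real.cos a + Real.cos b + Real.cos c) / σ ^ 2) * x) *
          Real.exp (-(1 / (2 * σ ^ 2)) * y ^ 2 +
            (m * (Real.sin a + Real.sin b + Real.sin c) / σ ^ 2) * y)) := by
  unfold Gg
  rw [← Real.exp_add, ← Real.exp_add,
    pow_two (Real.exp (-(x ^ 2 + y ^ 2) / (2 * σ ^ 2))), ← Real.exp_add, ← Real.exp_sub,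
    ← Real.exp_add, ← Real.exp_add]
  congr 1
  have ha := Real.sin_sq_add_cos_sq a
  have hb := Real.sin_sq_add_cos_sq b
  have hc := Real.sin_sq_add_cos_sq c
  field_simp
  linear_combination (-m ^ 2) * (ha + hb + hc)

lemma gauss_integrable_s18 (a b : ℝ) (ha : 0 < a) :
    Integrable (fun u : ℝ => Real.exp (-a * u ^ 2 + b * u)) := by
  have h : (fun u : ℝ => Real.exp (-a * u ^ 2 + b * u))
      = fun u : ℝ => Real.exp (b ^ 2 / (4 * a)) * Real.exp (-a * (u - b / (2 * a)) ^ 2) := by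
    funext u
    rw [← Real.exp_add]
    congr 1
    field_simp
    ring
  rw [h]
  exact ((integrable_exp_neg_mul_sq ha).comp_sub_right (b / (2 * a))).const_mul _

lemma gauss_integral_s18 (a b : ℝ) (ha : 0 < a) :
    (∫ u : ℝ, Real.exp (-a * u ^ 2 + b * u))
      = Real.sqrt (π / a) * Real.exp (b ^ 2 / (4 * a)) := by
  have h : (fun u : ℝ => Real.exp (-a * u ^ 2 + b * u))
      = fun u : ℝ => Real.exp (b ^ 2 / (4 * a)) * Real.exp (-a * (u - b / (2 * a)) ^ 2) := by
    funext u
    rw [← Real.exp_add]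
    congr 1
    field_simp
    ring
  rw [h, integral_const_mul, integral_sub_right_eq_self (fun u : ℝ => Real.exp (-a * u ^ 2)),
    integral_gaussian, mul_comm]

lemma sum_sq_trig (a b c : ℝ) :
    (Real.cos a + Real.cos b + Real.cos c) ^ 2 + (Real.sin a + Real.sin b + Real.sin c) ^ 2
      = 3 + 2 * (Real.cos (a - b) + Real.cos (a - c) + Real.cos (b - c)) := by
  rw [Real.cos_sub, Real.cos_sub, Real.cos_sub]
  nlinarith [Real.sin_sq_add_cos_sq a, Real.sin_sq_add_cos_sq b, Real.sin_sq_add_cos_sq c]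

lemma ha2 (σ : ℝ) (hσ : 0 < σ) : (0:ℝ) < 1 / (2 * σ ^ 2) := by positivity

lemma inner_integrable (σ m : ℝ) (hσ : 0 < σ) (a b c x : ℝ) :
    Integrable (fun y => Gg σ m a x y * Gg σ m b x y * Gg σ m c x y /
      (Real.exp (-(x ^ 2 + y ^ 2) / (2 * σ ^ 2))) ^ 2) := by
  simp only [fun y => prod_div_eq σ m a b c x y hσ.ne']
  exact ((gauss_integrable_s18 _ _ (ha2 σ hσ)).const_mul _).const_mul _

lemma inner_eval (σ m : ℝ) (hσ : 0 < σ) (a b c x : ℝ) :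
    (∫ y : ℝ, Gg σ m a x y * Gg σ m b x y * Gg σ m c x y /
        (Real.exp (-(x ^ 2 + y ^ 2) / (2 * σ ^ 2))) ^ 2)
      = Real.exp (-(3 * m ^ 2) / (2 * σ ^ 2)) *
        Real.exp (-(1 / (2 * σ ^ 2)) * x ^ 2 +
          (m * (Real.cos a + Real.cos b + Real.cos c) / σ ^ 2) * x) *
        (Real.sqrt (π / (1 / (2 * σ ^ 2))) *
          Real.exp ((m * (Real.sin a + Real.sin b + Real.sin c) / σ ^ 2) ^ 2 /
            (4 * (1 / (2 * σ ^ 2))))) := by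
  simp only [fun y => prod_div_eq σ m a b c x y hσ.ne']
  rw [integral_const_mul, integral_const_mul, gauss_integral_s18 _ _ (ha2 σ hσ)]
  ring

lemma outer_integrable (σ m : ℝ) (hσ : 0 < σ) (a b c : ℝ) :
    Integrable (fun x => ∫ y : ℝ, Gg σ m a x y * Gg σ m b x y * Gg σ m c x y /
      (Real.exp (-(x ^ 2 + y ^ 2) / (2 * σ ^ 2))) ^ 2) := by
  simp only [fun x => inner_eval σ m hσ a b c x]
  exact (((gauss_integrable_s18 _ _ (ha2 σ hσ)).const_mul _).mul_const _)

lemma core (σ m : ℝ) (hσ : 0 < σ) (a b c : ℝ) :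
    (∫ x : ℝ, ∫ y : ℝ, Gg σ m a x y * Gg σ m b x y * Gg σ m c x y /
        (Real.exp (-(x ^ 2 + y ^ 2) / (2 * σ ^ 2))) ^ 2)
      = 2 * π * σ ^ 2 * Real.exp ((m ^ 2 / σ ^ 2) *
          (Real.cos (a - b) + Real.cos (a - c) + Real.cos (b - c))) := by
  simp only [fun x => inner_eval σ m hσ a b c x]
  have hrw : (fun x : ℝ => Real.exp (-(3 * m ^ 2) / (2 * σ ^ 2)) *
        Real.exp (-(1 / (2 * σ ^ 2)) * x ^ 2 +
          (m * (Real.cos a + Real.cos b + Real.cos c) / σ ^ 2) * x) *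
        (Real.sqrt (π / (1 / (2 * σ ^ 2))) *
          Real.exp ((m * (Real.sin a + Real.sin b + Real.sin c) / σ ^ 2) ^ 2 /
            (4 * (1 / (2 * σ ^ 2))))))
      = fun x : ℝ => (Real.exp (-(3 * m ^ 2) / (2 * σ ^ 2)) *
        (Real.sqrt (π / (1 / (2 * σ ^ 2))) *
          Real.exp ((m * (Real.sin a + Real.sin b + Real.sin c) / σ ^ 2) ^ 2 /
            (4 * (1 / (2 * σ ^ 2)))))) *
        Real.exp (-(1 / (2 * σ ^ 2)) * x ^ 2 +
          (m * (Real.cos a + Real.cos b + Real.cos c) / σ ^ 2) * x) := by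
    funext x; ring
  rw [hrw, integral_const_mul, gauss_integral_s18 _ _ (ha2 σ hσ)]
  rw [show Real.exp (-(3 * m ^ 2) / (2 * σ ^ 2)) *
        (Real.sqrt (π / (1 / (2 * σ ^ 2))) *
          Real.exp ((m * (Real.sin a + Real.sin b + Real.sin c) / σ ^ 2) ^ 2 /
            (4 * (1 / (2 * σ ^ 2))))) *
      (Real.sqrt (π / (1 / (2 * σ ^ 2))) *
        Real.exp ((m * (Real.cos a + Real.cos b + Real.cos c) / σ ^ 2) ^ 2 /
          (4 * (1 / (2 * σ ^ 2)))))
      = (Real.sqrt (π / (1 / (2 * σ ^ 2))) * Real.sqrt (π / (1 / (2 * σ ^ 2)))) *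
        (Real.exp (-(3 * m ^ 2) / (2 * σ ^ 2)) *
          Real.exp ((m * (Real.sin a + Real.sin b + Real.sin c) / σ ^ 2) ^ 2 /
            (4 * (1 / (2 * σ ^ 2)))) *
          Real.exp ((m * (Real.cos a + Real.cos b + Real.cos c) / σ ^ 2) ^ 2 /
            (4 * (1 / (2 * σ ^ 2))))) by ring,
    Real.mul_self_sqrt (le_of_lt (by positivity : (0:ℝ) < π / (1 / (2 * σ ^ 2)))),
    ← Real.exp_add, ← Real.exp_add]
  rw [show π / (1 / (2 * σ ^ 2)) = 2 * π * σ ^ 2 by field_simp]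
  congr 2
  have h := sum_sq_trig a b c
  field_simp
  linear_combination (4 * m ^ 2) * h

lemma key_pt (σ A β Θt Θp Θz x y : ℝ) (hσ : σ ≠ 0) :
    ((1:ℝ) / 2 * (1 / (2 * π * σ ^ 2)) *
        (Real.exp (-((x - A * β * Real.cos Θt) ^ 2 + (y - A * β * Real.sin Θt) ^ 2) / (2 * σ ^ 2)) +
         Real.exp (-((x + A * β * Real.cos Θt) ^ 2 + (y + A * β * Real.sin Θt) ^ 2) / (2 * σ ^ 2)))) *
      ((1:ℝ) / 2 * (1 / (2 * π * σ ^ 2)) *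
        (Real.exp (-((x - A * β * Real.cos Θp) ^ 2 + (y - A * β * Real.sin Θp) ^ 2) / (2 * σ ^ 2)) +
         Real.exp (-((x + A * β * Real.cos Θp) ^ 2 + (y + A * β * Real.sin Θp) ^ 2) / (2 * σ ^ 2)))) *
      ((1:ℝ) / 2 * (1 / (2 * π * σ ^ 2)) *
        (Real.exp (-((x - A * β * Real.cos Θz) ^ 2 + (y - A * β * Real.sin Θz) ^ 2) / (2 * σ ^ 2)) +
         Real.exp (-((x + A * β * Real.cos Θz) ^ 2 + (y + A * β * Real.sin Θz) ^ 2) / (2 * σ ^ 2)))) /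
      ((1 / (2 * π * σ ^ 2)) * Real.exp (-(x ^ 2 + y ^ 2) / (2 * σ ^ 2))) ^ 2
    = (1 / (2 * π * σ ^ 2)) / 8 *
        ∑ p : Bool × Bool × Bool,
          Gg σ (A * β) (phh p.1 Θt) x y * Gg σ (A * β) (phh p.2.1 Θp) x y *
            Gg σ (A * β) (phh p.2.2 Θz) x y /
            (Real.exp (-(x ^ 2 + y ^ 2) / (2 * σ ^ 2))) ^ 2 := by
  simp only [Fintype.sum_prod_type, Fintype.sum_bool, phh, Bool.false_eq_true, eq_self_iff_true, if_true, if_false, Gg_pi]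
  simp only [Gg]
  have h0 := Real.exp_ne_zero (-(x ^ 2 + y ^ 2) / (2 * σ ^ 2))
  field_simp
  ring

theorem triple_product_integral (A β σ Θt Θp Θz : ℝ) (hA : 0 < A) (hβ : 0 < β) (hσ : 0 < σ)
    (Q : ℝ → ℝ → ℝ → ℝ) (Q₀ : ℝ → ℝ → ℝ)
    (hQ : Q = fun Θ x y => (1 / 2) * (1 / (2 * Real.pi * σ ^ 2)) *
      (Real.exp (-((x - A * β * Real.cos Θ) ^ 2 + (y - A * β * Real.sin Θ) ^ 2) / (2 * σ ^ 2)) +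
       Real.exp (-((x + A * β * Real.cos Θ) ^ 2 + (y + A * β * Real.sin Θ) ^ 2) / (2 * σ ^ 2))))
    (hQ₀ : Q₀ = fun x y => (1 / (2 * Real.pi * σ ^ 2)) *
      Real.exp (-(x ^ 2 + y ^ 2) / (2 * σ ^ 2)))
    (γ Δtp Δtz : ℝ) (hγ : γ = A ^ 2 * β ^ 2 / σ ^ 2)
    (hΔtp : Δtp = Θt - Θp) (hΔtz : Δtz = Θt - Θz) :
    (∫ x : ℝ, ∫ y : ℝ, Q Θt x y * Q Θp x y * Q Θz x y / (Q₀ x y) ^ 2)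
      = (1 / 4) *
        (Real.exp (-γ * (-Real.cos (Δtp - Δtz) - Real.cos Δtp - Real.cos Δtz)) +
         Real.exp (-γ * (-Real.cos (Δtp - Δtz) + Real.cos Δtp + Real.cos Δtz)) +
         Real.exp (-γ * (Real.cos (Δtp - Δtz) + Real.cos Δtp - Real.cos Δtz)) +
         Real.exp (-γ * (Real.cos (Δtp - Δtz) - Real.cos Δtp + Real.cos Δtz))) := by
  subst hQ hQ₀ hγ hΔtp hΔtz
  simp only []
  have hkey := fun x y => key_pt σ A β Θt Θp Θz x y hσ.ne'
  simp only [hkey]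
  have s1 : ∀ x : ℝ, (∫ y : ℝ, (1 / (2 * π * σ ^ 2)) / 8 *
        ∑ p : Bool × Bool × Bool,
          Gg σ (A * β) (phh p.1 Θt) x y * Gg σ (A * β) (phh p.2.1 Θp) x y *
            Gg σ (A * β) (phh p.2.2 Θz) x y /
            (Real.exp (-(x ^ 2 + y ^ 2) / (2 * σ ^ 2))) ^ 2)
      = (1 / (2 * π * σ ^ 2)) / 8 *
        ∑ p : Bool × Bool × Bool, ∫ y : ℝ,
          Gg σ (A * β) (phh p.1 Θt) x y * Gg σ (A * β) (phh p.2.1 Θp) x y *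
            Gg σ (A * β) (phh p.2.2 Θz) x y /
            (Real.exp (-(x ^ 2 + y ^ 2) / (2 * σ ^ 2))) ^ 2 := by
    intro x
    rw [integral_const_mul, integral_finset_sum _
      (fun p _ => inner_integrable σ (A * β) hσ _ _ _ x)]
  simp only [s1]
  rw [integral_const_mul, integral_finset_sum _
    (fun p _ => outer_integrable σ (A * β) hσ _ _ _)]
  simp only [fun p : Bool × Bool × Bool =>
    core σ (A * β) hσ (phh p.1 Θt) (phh p.2.1 Θp) (phh p.2.2 Θz)]
  simp only [Fintype.sum_prod_type, Fintype.sum_bool, phh, Bool.false_eq_true, eq_self_iff_true, if_true, if_false]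
  have c1 : ∀ u v : ℝ, Real.cos (u + π - v) = -Real.cos (u - v) := by
    intro u v
    rw [show u + π - v = u - v + π by ring, Real.cos_add_pi]
  have c2 : ∀ u v : ℝ, Real.cos (u - (v + π)) = -Real.cos (u - v) := by
    intro u v
    rw [show u - (v + π) = -(v - u + π) by ring, Real.cos_neg, Real.cos_add_pi,
      show v - u = -(u - v) by ring, Real.cos_neg]
  have c3 : ∀ u v : ℝ, Real.cos (u + π - (v + π)) = Real.cos (u - v) := by
    intro u v
    rw [show u + π - (v + π) = u - v by ring]
  simp only [c3, c1, c2]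
  rw [show Θt - Θp - (Θt - Θz) = -(Θp - Θz) by ring, Real.cos_neg]
  have hπ := Real.pi_ne_zero
  field_simp
  ring_nf
end
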